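/- The composition is the greatest lower bound with respect to simulation: let Σ, Σ₁, Σ₂ be systems in driving variable form with the same external space W. If Σ ≼ Σ₁ and Σ ≼ Σ₂, then Σ ≼ Σ₁ ∘ Σ₂. -/

import Mathlib

/-- A linear system in driving variable form `ẋ = A x + G d`, `w = C x`, `0 = H x`. -/
structure DVSystem (X W D Y : Type)
    [AddCommGroup X] [Module ℝ X] [AddCommGroup W] [Module ℝ W]
    [AddCommGroup D] [Module ℝ D] [AddCommGroup Y] [Module ℝ Y] where
  A : X →ₗ[ℝ] X
  G : D →ₗ[ℝ] X
  C : X →ₗ[ℝ] W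
  H : X →ₗ[ℝ] Y

namespace DVSystem

section basic

variable {X W D Y : Type}
  [AddCommGroup X] [Module ℝ X] [AddCommGroup W] [Module ℝ W]
  [AddCommGroup D] [Module ℝ D] [AddCommGroup Y] [Module ℝ Y]

/-- A subspace `U` is consistent-admissible if `A U ⊆ U + im G` and `U ⊆ ker H`. -/
def Admissible (P : DVSystem X W D Y) (U : Submodule ℝ X) : Prop :=
  U.map P.A ≤ U ⊔ LinearMap.range P.G ∧ U ≤ LinearMap.ker P.H

/-- The consistent subspace `V*`: the largest consistent-admissible subspace. -/
def V (P : DVSystem X W D Y) : Submodule ℝ X :=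
  sSup {U | P.Admissible U}

end basic

section sim

variable {W : Type} [AddCommGroup W] [Module ℝ W]
variable {X₁ D₁ Y₁ : Type} [AddCommGroup X₁] [Module ℝ X₁]
  [AddCommGroup D₁] [Module ℝ D₁] [AddCommGroup Y₁] [Module ℝ Y₁]
variable {X₂ D₂ Y₂ : Type} [AddCommGroup X₂] [Module ℝ X₂]
  [AddCommGroup D₂] [Module ℝ D₂] [AddCommGroup Y₂] [Module ℝ Y₂]

/-- Items (i)-(ii) of the (algebraic) definition of a simulation relation. -/
def SimConds (P₁ : DVSystem X₁ W D₁ Y₁) (P₂ : DVSystem X₂ W D₂ Y₂)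
    (S : Submodule ℝ (X₁ × X₂)) : Prop :=
  ∀ x₁ x₂, (x₁, x₂) ∈ S →
    (∀ d₁ : D₁, P₁.A x₁ + P₁.G d₁ ∈ P₁.V →
      ∃ d₂ : D₂, P₂.A x₂ + P₂.G d₂ ∈ P₂.V ∧
        (P₁.A x₁ + P₁.G d₁, P₂.A x₂ + P₂.G d₂) ∈ S) ∧
    P₁.C x₁ = P₂.C x₂

/-- `S` is a simulation relation of `P₁` by `P₂`. -/
def IsSimRel (P₁ : DVSystem X₁ W D₁ Y₁) (P₂ : DVSystem X₂ W D₂ Y₂)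
    (S : Submodule ℝ (X₁ × X₂)) : Prop :=
  S.map (LinearMap.fst ℝ X₁ X₂) ≤ P₁.V ∧ S.map (LinearMap.snd ℝ X₁ X₂) ≤ P₂.V ∧
    SimConds P₁ P₂ S

/-- `S` is a full simulation relation of `P₁` by `P₂`: in addition `π₁(S) = V₁*`. -/
def IsFullSimRel (P₁ : DVSystem X₁ W D₁ Y₁) (P₂ : DVSystem X₂ W D₂ Y₂)
    (S : Submodule ℝ (X₁ × X₂)) : Prop :=
  IsSimRel P₁ P₂ S ∧ S.map (LinearMap.fst ℝ X₁ X₂) = P₁.V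

/-- `P₁ ≼ P₂`: `P₁` is simulated by `P₂`. -/
def Simulates (P₁ : DVSystem X₁ W D₁ Y₁) (P₂ : DVSystem X₂ W D₂ Y₂) : Prop :=
  ∃ S : Submodule ℝ (X₁ × X₂), IsFullSimRel P₁ P₂ S

/-- The composition `P₁ ∘ P₂` obtained by sharing the external variable `w₁ = w₂`. -/
noncomputable def comp (P₁ : DVSystem X₁ W D₁ Y₁) (P₂ : DVSystem X₂ W D₂ Y₂) :
    DVSystem (X₁ × X₂) W (D₁ × D₂) (Y₁ × Y₂ × W) where
  A := P₁.A.prodMap P₂.A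
  G := P₁.G.prodMap P₂.G
  C := (1/2 : ℝ) • (P₁.C ∘ₗ LinearMap.fst ℝ X₁ X₂ + P₂.C ∘ₗ LinearMap.snd ℝ X₁ X₂)
  H := (P₁.H ∘ₗ LinearMap.fst ℝ X₁ X₂).prod
    ((P₂.H ∘ₗ LinearMap.snd ℝ X₁ X₂).prod
      (P₁.C ∘ₗ LinearMap.fst ℝ X₁ X₂ - P₂.C ∘ₗ LinearMap.snd ℝ X₁ X₂))

end sim

section relcomp

variable {X₁ X₂ X₃ : Type} [AddCommGroup X₁] [Module ℝ X₁]
  [AddCommGroup X₂] [Module ℝ X₂] [AddCommGroup X₃] [Module ℝ X₃]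

/-- Composition of linear relations:
`{(x₁, x₃) | ∃ x₂, (x₁, x₂) ∈ S₁₂ ∧ (x₂, x₃) ∈ S₂₃}`. -/
def relComp (S₁₂ : Submodule ℝ (X₁ × X₂)) (S₂₃ : Submodule ℝ (X₂ × X₃)) :
    Submodule ℝ (X₁ × X₃) where
  carrier := {p | ∃ x₂, (p.1, x₂) ∈ S₁₂ ∧ (x₂, p.2) ∈ S₂₃}
  zero_mem' := ⟨0, S₁₂.zero_mem, S₂₃.zero_mem⟩
  add_mem' := by
    rintro a b ⟨y, hy1, hy2⟩ ⟨z, hz1, hz2⟩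
    exact ⟨y + z, S₁₂.add_mem hy1 hz1, S₂₃.add_mem hy2 hz2⟩
  smul_mem' := by
    rintro c a ⟨y, h1, h2⟩
    exact ⟨c • y, S₁₂.smul_mem c h1, S₂₃.smul_mem c h2⟩

/-- The pairing `{(x, (x₁, x₂)) | (x, x₁) ∈ S₁ ∧ (x, x₂) ∈ S₂}` of two relations. -/
def pairRel (S₁ : Submodule ℝ (X₁ × X₂)) (S₂ : Submodule ℝ (X₁ × X₃)) :
    Submodule ℝ (X₁ × X₂ × X₃) where
  carrier := {p | (p.1, p.2.1) ∈ S₁ ∧ (p.1, p.2.2) ∈ S₂}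
  zero_mem' := ⟨S₁.zero_mem, S₂.zero_mem⟩
  add_mem' := by
    rintro a b ⟨ha1, ha2⟩ ⟨hb1, hb2⟩
    exact ⟨S₁.add_mem ha1 hb1, S₂.add_mem ha2 hb2⟩
  smul_mem' := by
    rintro c a ⟨h1, h2⟩
    exact ⟨S₁.smul_mem c h1, S₂.smul_mem c h2⟩

end relcomp

section contract

variable {W : Type} [AddCommGroup W] [Module ℝ W]
variable {X D Y Xa Da Ya Xg Dg Yg : Type}
  [AddCommGroup X] [Module ℝ X] [AddCommGroup D] [Module ℝ D]
  [AddCommGroup Y] [Module ℝ Y]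
  [AddCommGroup Xa] [Module ℝ Xa] [AddCommGroup Da] [Module ℝ Da]
  [AddCommGroup Ya] [Module ℝ Ya]
  [AddCommGroup Xg] [Module ℝ Xg] [AddCommGroup Dg] [Module ℝ Dg]
  [AddCommGroup Yg] [Module ℝ Yg]

/-- `Sys` implements the contract `(Ass, Gar)` if `E ∘ Sys ≼ Gar` for every
compatible environment `E`, i.e., every environment with `E ≼ Ass`. -/
def Implements (Sys : DVSystem X W D Y)
    (Ass : DVSystem Xa W Da Ya) (Gar : DVSystem Xg W Dg Yg) : Prop :=
  ∀ (Xe De Ye : Type) [AddCommGroup Xe] [Module ℝ Xe] [FiniteDimensional ℝ Xe]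
    [AddCommGroup De] [Module ℝ De] [FiniteDimensional ℝ De]
    [AddCommGroup Ye] [Module ℝ Ye] [FiniteDimensional ℝ Ye]
    (E : DVSystem Xe W De Ye),
    Simulates E Ass → Simulates (comp E Sys) Gar

end contract

section refine

variable {W : Type} [AddCommGroup W] [Module ℝ W]
variable {Xa Da Ya Xg Dg Yg Xa' Da' Ya' Xg' Dg' Yg' : Type}
  [AddCommGroup Xa] [Module ℝ Xa] [AddCommGroup Da] [Module ℝ Da]
  [AddCommGroup Ya] [Module ℝ Ya]
  [AddCommGroup Xg] [Module ℝ Xg] [AddCommGroup Dg] [Module ℝ Dg]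
  [AddCommGroup Yg] [Module ℝ Yg]
  [AddCommGroup Xa'] [Module ℝ Xa'] [AddCommGroup Da'] [Module ℝ Da']
  [AddCommGroup Ya'] [Module ℝ Ya']
  [AddCommGroup Xg'] [Module ℝ Xg'] [AddCommGroup Dg'] [Module ℝ Dg']
  [AddCommGroup Yg'] [Module ℝ Yg']

/-- The contract `(Ass', Gar')` refines the contract `(Ass, Gar)`:
`Ass ≼ Ass'` and `Ass ∘ Gar' ≼ Gar`. -/
def Refines (Ass' : DVSystem Xa' W Da' Ya') (Gar' : DVSystem Xg' W Dg' Yg')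
    (Ass : DVSystem Xa W Da Ya) (Gar : DVSystem Xg W Dg Yg) : Prop :=
  Simulates Ass Ass' ∧ Simulates (comp Ass Gar') Gar

end refine

section vlemmas

variable {X W D Y : Type}
  [AddCommGroup X] [Module ℝ X] [AddCommGroup W] [Module ℝ W]
  [AddCommGroup D] [Module ℝ D] [AddCommGroup Y] [Module ℝ Y]

lemma admissible_V (P : DVSystem X W D Y) : P.Admissible P.V := by
  constructor
  · rw [V, sSup_eq_iSup', Submodule.map_iSup]
    exact iSup_le fun U => le_trans U.2.1 (sup_le_sup_right (le_iSup _ U) _)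
  · exact sSup_le fun U hU => hU.2

lemma exists_d (P : DVSystem X W D Y) {x : X} (hx : x ∈ P.V) :
    ∃ d : D, P.A x + P.G d ∈ P.V := by
  have h := (admissible_V P).1 (Submodule.mem_map_of_mem hx)
  rw [Submodule.mem_sup] at h
  obtain ⟨v, hv, g, ⟨d, rfl⟩, heq⟩ := h
  refine ⟨-d, ?_⟩
  have : P.A x + P.G (-d) = v := by rw [map_neg, ← heq]; abel
  rwa [this]

lemma V_le_ker (P : DVSystem X W D Y) : P.V ≤ LinearMap.ker P.H :=
  (admissible_V P).2

end vlemmas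

end DVSystem

open DVSystem

/-- The composition is a greatest lower bound: if `Σ ≼ Σ₁` and `Σ ≼ Σ₂`
then `Σ ≼ Σ₁ ∘ Σ₂`. -/
theorem simulates_comp_of_simulates {W : Type} [AddCommGroup W] [Module ℝ W] [FiniteDimensional ℝ W]
    {X₁ D₁ Y₁ : Type} [AddCommGroup X₁] [Module ℝ X₁] [FiniteDimensional ℝ X₁]
    [AddCommGroup D₁] [Module ℝ D₁] [FiniteDimensional ℝ D₁]
    [AddCommGroup Y₁] [Module ℝ Y₁] [FiniteDimensional ℝ Y₁]
    {X₂ D₂ Y₂ : Type} [AddCommGroup X₂] [Module ℝ X₂] [FiniteDimensional ℝ X₂]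
    [AddCommGroup D₂] [Module ℝ D₂] [FiniteDimensional ℝ D₂]
    [AddCommGroup Y₂] [Module ℝ Y₂] [FiniteDimensional ℝ Y₂]
    {X D Y : Type} [AddCommGroup X] [Module ℝ X] [FiniteDimensional ℝ X]
    [AddCommGroup D] [Module ℝ D] [FiniteDimensional ℝ D]
    [AddCommGroup Y] [Module ℝ Y] [FiniteDimensional ℝ Y]
    (P : DVSystem X W D Y) (P₁ : DVSystem X₁ W D₁ Y₁) (P₂ : DVSystem X₂ W D₂ Y₂)
    (h₁ : Simulates P P₁) (h₂ : Simulates P P₂) :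
    Simulates P (comp P₁ P₂) := by
  obtain ⟨S₁, ⟨⟨h1f, h1s, h1c⟩, h1eq⟩⟩ := h₁
  obtain ⟨S₂, ⟨⟨h2f, h2s, h2c⟩, h2eq⟩⟩ := h₂
  set Q := comp P₁ P₂ with hQ
  set S : Submodule ℝ (X × (X₁ × X₂)) := pairRel S₁ S₂ with hS
  set U : Submodule ℝ (X₁ × X₂) := S.map (LinearMap.snd ℝ X (X₁ × X₂)) with hU
  -- the key step: given a state in S, produce the successor pair
  have step : ∀ x x₁ x₂, (x, x₁) ∈ S₁ → (x, x₂) ∈ S₂ →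
      ∀ d : D, P.A x + P.G d ∈ P.V →
      ∃ d₁ d₂, P₁.A x₁ + P₁.G d₁ ∈ P₁.V ∧ P₂.A x₂ + P₂.G d₂ ∈ P₂.V ∧
        (P.A x + P.G d, P₁.A x₁ + P₁.G d₁) ∈ S₁ ∧
        (P.A x + P.G d, P₂.A x₂ + P₂.G d₂) ∈ S₂ := by
    intro x x₁ x₂ hx1 hx2 d hd
    obtain ⟨d₁, hd₁V, hd₁S⟩ := ((h1c x x₁ hx1).1 d hd)
    obtain ⟨d₂, hd₂V, hd₂S⟩ := ((h2c x x₂ hx2).1 d hd)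
    exact ⟨d₁, d₂, hd₁V, hd₂V, hd₁S, hd₂S⟩
  -- U is admissible for the composed system
  have hUadm : Q.Admissible U := by
    constructor
    · rintro _ ⟨_, ⟨⟨x, x₁x₂⟩, ⟨hx1, hx2⟩, rfl⟩, rfl⟩
      obtain ⟨x₁, x₂⟩ := x₁x₂
      have hxV : x ∈ P.V := h1eq ▸ Submodule.mem_map_of_mem hx1
      obtain ⟨d, hd⟩ := exists_d P hxV
      obtain ⟨d₁, d₂, hd₁V, hd₂V, hd₁S, hd₂S⟩ := step x x₁ x₂ hx1 hx2 d hd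
      rw [Submodule.mem_sup]
      refine ⟨(P₁.A x₁ + P₁.G d₁, P₂.A x₂ + P₂.G d₂),
        ⟨(P.A x + P.G d, (P₁.A x₁ + P₁.G d₁, P₂.A x₂ + P₂.G d₂)), ⟨hd₁S, hd₂S⟩, rfl⟩,
        Q.G (-d₁, -d₂), ⟨(-d₁, -d₂), rfl⟩, ?_⟩
      show (P₁.A x₁ + P₁.G d₁, P₂.A x₂ + P₂.G d₂) + (P₁.G (-d₁), P₂.G (-d₂)) = _
      simp only [hQ, comp, LinearMap.prodMap_apply, LinearMap.snd_apply, Prod.mk_add_mk,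
        map_neg]
      rw [Prod.mk.injEq]
      exact ⟨by abel, by abel⟩
    · rintro _ ⟨⟨x, x₁, x₂⟩, ⟨hx1, hx2⟩, rfl⟩
      have hx₁V : x₁ ∈ P₁.V := h1s (Submodule.mem_map_of_mem hx1)
      have hx₂V : x₂ ∈ P₂.V := h2s (Submodule.mem_map_of_mem hx2)
      have hC : P₁.C x₁ = P₂.C x₂ := by
        rw [← (h1c x x₁ hx1).2, ← (h2c x x₂ hx2).2]
      have hH₁ : P₁.H x₁ = 0 := V_le_ker P₁ hx₁V
      have hH₂ : P₂.H x₂ = 0 := V_le_ker P₂ hx₂V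
      simp only [hQ, comp, LinearMap.mem_ker, LinearMap.prod_apply, LinearMap.coe_comp,
        Function.comp_apply, LinearMap.fst_apply, LinearMap.snd_apply, Function.prod,
        LinearMap.sub_apply, hH₁, hH₂, hC, sub_self]
      rfl
  have hUsub : U ≤ Q.V := le_sSup hUadm
  refine ⟨S, ⟨⟨?_, hUsub, ?_⟩, ?_⟩⟩
  · rintro _ ⟨⟨x, x₁, x₂⟩, ⟨hx1, _⟩, rfl⟩
    exact h1eq ▸ Submodule.mem_map_of_mem hx1
  · rintro x ⟨x₁, x₂⟩ ⟨hx1, hx2⟩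
    constructor
    · intro d hd
      obtain ⟨d₁, d₂, hd₁V, hd₂V, hd₁S, hd₂S⟩ := step x x₁ x₂ hx1 hx2 d hd
      refine ⟨(d₁, d₂), ?_, ?_⟩
      · have hmem : (P₁.A x₁ + P₁.G d₁, P₂.A x₂ + P₂.G d₂) ∈ U :=
          ⟨(P.A x + P.G d, (P₁.A x₁ + P₁.G d₁, P₂.A x₂ + P₂.G d₂)), ⟨hd₁S, hd₂S⟩, rfl⟩
        have heq : Q.A (x₁, x₂) + Q.G (d₁, d₂)
            = (P₁.A x₁ + P₁.G d₁, P₂.A x₂ + P₂.G d₂) := rfl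
        exact heq ▸ hUsub hmem
      · exact ⟨hd₁S, hd₂S⟩
    · have h1 := (h1c x x₁ hx1).2
      have h2 := (h2c x x₂ hx2).2
      show P.C x = Q.C (x₁, x₂)
      simp only [hQ, comp, LinearMap.smul_apply, LinearMap.add_apply, LinearMap.coe_comp,
        Function.comp_apply, LinearMap.fst_apply, LinearMap.snd_apply, ← h1, ← h2]
      rw [smul_add, ← add_smul]
      norm_num
  · refine le_antisymm ?_ ?_
    · rintro _ ⟨⟨x, x₁, x₂⟩, ⟨hx1, _⟩, rfl⟩
      exact h1eq ▸ Submodule.mem_map_of_mem hx1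
    · intro x hx
      obtain ⟨⟨x', x₁⟩, hx1, rfl⟩ := (h1eq ▸ hx : x ∈ S₁.map (LinearMap.fst ℝ X X₁))
      obtain ⟨⟨x'', x₂⟩, hx2, hx''⟩ := (h2eq ▸ hx : _ ∈ S₂.map (LinearMap.fst ℝ X X₂))
      simp only [LinearMap.fst_apply] at hx''
      subst hx''
      exact ⟨(x'', (x₁, x₂)), ⟨hx1, hx2⟩, rfl⟩
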